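/- Let H ⊂ L(X) be a nonunital RKHA with comultiplication Δ. Define the unitalization H̃ = ℂ ⊕ H as an RKHS on X ∪ {∞} with kernel k̃(x,y) = 1 + k(x,y) for x,y ∈ X and k̃(x,y) = 1 otherwise. Then the map k̃_x ↦ k̃_x ⊗ k̃_x extends to a bounded operator Δ̃ on H̃, given by Δ̃(a ⊕ f) = a(1⊗1) ⊕ (1 ⊗ f) ⊕ (f ⊗ 1) ⊕ Δ(f) under the identification H̃ ⊗ H̃ ≅ ℂ ⊕ (ℂ ⊗ H) ⊕ (H ⊗ ℂ) ⊕ (H ⊗ H). Hence H̃ is a unital RKHA. -/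

import Mathlib

open scoped ComplexInnerProductSpace

noncomputable section

/-- An abstract Hilbert tensor product structure: a bilinear map `tmul` whose
elementary tensors satisfy the inner product identity
`⟪a ⊗ b, c ⊗ d⟫ = ⟪a, c⟫ ⟪b, d⟫` and whose elementary tensors span a dense subspace. -/
structure TensorLike (H K HT : Type*) [NormedAddCommGroup H] [InnerProductSpace ℂ H]
    [NormedAddCommGroup K] [InnerProductSpace ℂ K]
    [NormedAddCommGroup HT] [InnerProductSpace ℂ HT] where
  tmul : H →ₗ[ℂ] K →ₗ[ℂ] HT
  inner_tmul : ∀ (a c : H) (b d : K),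
    ⟪tmul a b, tmul c d⟫ = ⟪a, c⟫ * ⟪b, d⟫
  dense_span : Dense (Submodule.span ℂ (Set.range fun p : H × K => tmul p.1 p.2) : Set HT)

/-- the unitalization `H̃ = ℂ ⊕ H` of a nonunital RKHA (realized as a
Hilbert space `Hu` via a linear isomorphism `P` with the ℓ²-direct-sum inner product),
with kernel `k̃_x = P(1, k_x)`, `k̃_∞ = P(1, 0)`, and tensor square realized via `Q` as
`ℂ ⊕ (ℂ⊗H) ⊕ (H⊗ℂ) ⊕ (H⊗H)`, has a bounded comultiplication
`Δ̃ (P(a,f)) = Q(a, (f, (f, Δ f)))` extending `k̃ ↦ k̃ ⊗ k̃`, and `P(1,0)` is a unit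
(pairs to 1 with every kernel section). -/
theorem stmt_12 {X H HT Hu HuT : Type*}
    [NormedAddCommGroup H] [InnerProductSpace ℂ H] [CompleteSpace H]
    [NormedAddCommGroup HT] [InnerProductSpace ℂ HT] [CompleteSpace HT]
    [NormedAddCommGroup Hu] [InnerProductSpace ℂ Hu] [CompleteSpace Hu]
    [NormedAddCommGroup HuT] [InnerProductSpace ℂ HuT] [CompleteSpace HuT]
    (k : X → H) (T : TensorLike H H HT) (Δ : H →L[ℂ] HT)
    (hΔ : ∀ x, Δ (k x) = T.tmul (k x) (k x))
    (hnonunital : ¬∃ one : H, ∀ x, ⟪k x, one⟫ = 1)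
    (P : (ℂ × H) ≃ₗ[ℂ] Hu)
    (hP : ∀ (a b : ℂ) (f g : H),
      ⟪P (a, f), P (b, g)⟫ = (starRingEnd ℂ) a * b + ⟪f, g⟫)
    (Q : (ℂ × (H × (H × HT))) ≃ₗ[ℂ] HuT)
    (hQ : ∀ (a b : ℂ) (f₁ g₁ f₂ g₂ : H) (s t : HT),
      ⟪Q (a, (f₁, (f₂, s))), Q (b, (g₁, (g₂, t)))⟫ =
        (starRingEnd ℂ) a * b + ⟪f₁, g₁⟫ + ⟪f₂, g₂⟫ + ⟪s, t⟫)
    (Tu : TensorLike Hu Hu HuT)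
    (hTu : ∀ (a b : ℂ) (f g : H),
      Tu.tmul (P (a, f)) (P (b, g)) = Q (a * b, (a • g, (b • f, T.tmul f g)))) :
    ∃ Δt : Hu →L[ℂ] HuT,
      (∀ x : X, Δt (P (1, k x)) = Tu.tmul (P (1, k x)) (P (1, k x))) ∧
      (Δt (P (1, 0)) = Tu.tmul (P (1, 0)) (P (1, 0))) ∧
      (∀ (a : ℂ) (f : H), Δt (P (a, f)) = Q (a, (f, (f, Δ f)))) ∧
      (∀ x : X, ⟪P (1, k x), P (1, 0)⟫ = 1) := by
  classical
  set C : ℝ := Real.sqrt (2 + ‖Δ‖ ^ 2) with hCdef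
  let M : (ℂ × H) →ₗ[ℂ] (ℂ × (H × (H × HT))) :=
    LinearMap.prod (LinearMap.fst ℂ ℂ H)
      (LinearMap.prod (LinearMap.snd ℂ ℂ H)
        (LinearMap.prod (LinearMap.snd ℂ ℂ H)
          ((Δ : H →ₗ[ℂ] HT) ∘ₗ LinearMap.snd ℂ ℂ H)))
  let L₀ : Hu →ₗ[ℂ] HuT := (Q : (ℂ × (H × (H × HT))) →ₗ[ℂ] HuT) ∘ₗ M ∘ₗ (P.symm : Hu →ₗ[ℂ] ℂ × H)
  have hL₀ : ∀ (a : ℂ) (f : H), L₀ (P (a, f)) = Q (a, (f, (f, Δ f))) := by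
    intro a f
    simp [L₀, M]
  have hnorm : ∀ u : Hu, ‖L₀ u‖ ≤ C * ‖u‖ := by
    intro u
    set a : ℂ := (P.symm u).1
    set f : H := (P.symm u).2
    have hu : u = P (a, f) := by simp [a, f]
    have hLu : L₀ u = Q (a, (f, (f, Δ f))) := by rw [hu, hL₀]
    have hnormL : ‖L₀ u‖ ^ 2 = ‖a‖ ^ 2 + ‖f‖ ^ 2 + ‖f‖ ^ 2 + ‖Δ f‖ ^ 2 := by
      have h1 : (⟪L₀ u, L₀ u⟫ : ℂ) = (starRingEnd ℂ) a * a + ⟪f, f⟫ + ⟪f, f⟫ + ⟪Δ f, Δ f⟫ := by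
        rw [hLu]; exact hQ a a f f f f (Δ f) (Δ f)
      rw [inner_self_eq_norm_sq_to_K (𝕜 := ℂ) (L₀ u), inner_self_eq_norm_sq_to_K (𝕜 := ℂ) f,
        inner_self_eq_norm_sq_to_K (𝕜 := ℂ) (Δ f), ← Complex.normSq_eq_conj_mul_self,
        ← Complex.sq_norm] at h1
      exact_mod_cast congrArg Complex.re h1
    have hnormu : ‖u‖ ^ 2 = ‖a‖ ^ 2 + ‖f‖ ^ 2 := by
      have h1 : (⟪u, u⟫ : ℂ) = (starRingEnd ℂ) a * a + ⟪f, f⟫ := by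
        rw [hu]; exact hP a a f f
      rw [inner_self_eq_norm_sq_to_K (𝕜 := ℂ) u, inner_self_eq_norm_sq_to_K (𝕜 := ℂ) f,
        ← Complex.normSq_eq_conj_mul_self, ← Complex.sq_norm] at h1
      exact_mod_cast congrArg Complex.re h1
    have hΔf : ‖Δ f‖ ^ 2 ≤ ‖Δ‖ ^ 2 * ‖f‖ ^ 2 := by
      have := Δ.le_opNorm f
      calc ‖Δ f‖ ^ 2 ≤ (‖Δ‖ * ‖f‖) ^ 2 := by
            apply pow_le_pow_left₀ (norm_nonneg _) this
        _ = ‖Δ‖ ^ 2 * ‖f‖ ^ 2 := by ring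
    have hsq : ‖L₀ u‖ ^ 2 ≤ (C * ‖u‖) ^ 2 := by
      have hC2 : C ^ 2 = 2 + ‖Δ‖ ^ 2 := Real.sq_sqrt (by positivity)
      have : (C * ‖u‖) ^ 2 = (2 + ‖Δ‖ ^ 2) * (‖a‖ ^ 2 + ‖f‖ ^ 2) := by
        rw [mul_pow, hC2, hnormu]
      rw [this, hnormL]
      nlinarith [norm_nonneg a, norm_nonneg f, norm_nonneg Δ, sq_nonneg ‖a‖, sq_nonneg ‖f‖, sq_nonneg ‖Δ‖]
    have hCnn : 0 ≤ C * ‖u‖ := by positivity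
    nlinarith [norm_nonneg (L₀ u)]
  refine ⟨L₀.mkContinuous C hnorm, ?_, ?_, ?_, ?_⟩
  · intro x
    rw [LinearMap.mkContinuous_apply, hL₀, hTu, hΔ]
    simp
  · rw [LinearMap.mkContinuous_apply, hL₀, hTu]
    simp
  · intro a f
    rw [LinearMap.mkContinuous_apply, hL₀]
  · intro x
    rw [hP]
    simp
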